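/- Let a, c, d : ℝ → ℝ be continuous functions. Index ℝ⁴ by the four states (0,0), (0,1), (1,0), (1,1) and let Λ : ℝ → Matrix (four states) (four states) ℝ have rows: state (0,0): (−(a(u)+c(u)), a(u), 0, c(u)); state (0,1): (0, −d(u), 0, d(u)); state (1,0): (0, 0, −(a(u)+c(u)), a(u)+c(u)); state (1,1): (0, 0, 0, 0). Fix t₀ ≥ 0 and suppose p : ℝ → (four states → ℝ) satisfies p(t₀) = the indicator of state (0,0) and, for every s ≥ t₀ and every state y, the coordinate function s ↦ p_y(s) has derivative (p(s) · Λ(s))_y = Σ_x p_x(s)·Λ(s)(x,y) at s. Then p_{(1,0)}(s) = 0 for all s ≥ t₀. -/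

import Mathlib

/-- (Systemic importance, eq. (6.13) of the paper.) For the generator
with rows `(0,0) : (−(a+c), a, 0, c)`, `(0,1) : (0, −d, 0, d)`,
`(1,0) : (0, 0, −(a+c), a+c)`, `(1,1) : 0`, any solution of the Kolmogorov forward
equation started at time `t₀` from the point mass at `(0,0)` never charges the state
`(1,0)`: the first institution cannot be in default alone. -/
theorem systemic_importance_no_lone_default (a c d : ℝ → ℝ)
    (ha : Continuous a) (hc : Continuous c) (hd : Continuous d)
    (Λ : ℝ → Matrix (Fin 2 × Fin 2) (Fin 2 × Fin 2) ℝ)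
    (hΛ : ∀ u : ℝ, Λ u = Matrix.of fun x y =>
      if x = ((0 : Fin 2), (0 : Fin 2)) then
        (if y = ((0 : Fin 2), (0 : Fin 2)) then -(a u + c u)
        else if y = ((0 : Fin 2), (1 : Fin 2)) then a u
        else if y = ((1 : Fin 2), (0 : Fin 2)) then 0
        else c u)
      else if x = ((0 : Fin 2), (1 : Fin 2)) then
        (if y = ((0 : Fin 2), (1 : Fin 2)) then -(d u)
        else if y = ((1 : Fin 2), (1 : Fin 2)) then d u
        else 0)
      else if x = ((1 : Fin 2), (0 : Fin 2)) then
        (if y = ((1 : Fin 2), (0 : Fin 2)) then -(a u + c u)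
        else if y = ((1 : Fin 2), (1 : Fin 2)) then a u + c u
        else 0)
      else 0)
    (t₀ : ℝ) (ht₀ : 0 ≤ t₀)
    (p : ℝ → (Fin 2 × Fin 2) → ℝ)
    (hp0 : p t₀ = fun x => if x = ((0 : Fin 2), (0 : Fin 2)) then 1 else 0)
    (hode : ∀ s : ℝ, t₀ ≤ s → ∀ y : Fin 2 × Fin 2,
      HasDerivAt (fun u => p u y) (∑ x, p s x * Λ s x y) s) :
    ∀ s : ℝ, t₀ ≤ s → p s ((1 : Fin 2), (0 : Fin 2)) = 0 := by

  intro s hs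
  set f : ℝ → ℝ := fun u => p u ((1 : Fin 2), (0 : Fin 2)) with hf
  have hf' : ∀ u : ℝ, t₀ ≤ u → HasDerivAt f (-(a u + c u) * f u) u := by
    intro u hu
    have h := hode u hu ((1 : Fin 2), (0 : Fin 2))
    have hsum : (∑ x, p u x * Λ u x ((1 : Fin 2), (0 : Fin 2))) = -(a u + c u) * f u := by
      rw [Fintype.sum_prod_type]
      simp [hΛ, Fin.sum_univ_two, Prod.ext_iff, hf]
      ring
    rwa [hsum] at h
  -- integrating factor
  have hac : Continuous fun u => a u + c u := ha.add hc
  set A : ℝ → ℝ := fun u => ∫ t in t₀..u, (a t + c t) with hA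
  have hA' : ∀ u : ℝ, HasDerivAt A (a u + c u) u := by
    intro u
    exact (hac.integral_hasStrictDerivAt t₀ u).hasDerivAt
  set g : ℝ → ℝ := fun u => f u * Real.exp (A u) with hg
  have hg' : ∀ u : ℝ, t₀ ≤ u → HasDerivAt g 0 u := by
    intro u hu
    have := (hf' u hu).mul ((hA' u).exp)
    exact this.congr_deriv (by ring)
  have hcont : ContinuousOn g (Set.Icc t₀ s) := by
    intro u hu
    exact ((hg' u hu.1).continuousAt).continuousWithinAt
  have hconst : ∀ u ∈ Set.Icc t₀ s, g u = g t₀ := by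
    intro u hu
    exact constant_of_has_deriv_right_zero hcont
      (fun x hx => ((hg' x hx.1).hasDerivWithinAt)) u hu
  have hgs : g s = g t₀ := hconst s ⟨hs, le_refl s⟩
  have hgt0 : g t₀ = 0 := by
    simp [hg, hf, hp0]
  have : f s * Real.exp (A s) = 0 := hgs.trans hgt0
  have hexp : Real.exp (A s) ≠ 0 := Real.exp_ne_zero _
  have := mul_eq_zero.mp this
  rcases this with h | h
  · exact h
  · exact absurd h hexp
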